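/- Let B ⊆ Z_{≥0}^{m_1+...+m_n} be a set of vectors of equal modulus satisfying the generalized bi-exchange property (for a, b ∈ B and a_{ij} > b_{ij}, there is l in block i with a_{il} < b_{il} and a − e_{ij} + e_{il} ∈ B). Fix a coordinate (i,j), let r = max{a_{ij} : a ∈ B}, and let b ∈ B with b_{ij} < r. Then there exists u ∈ B with u_{ij} = r such that u_{i'j'} ≤ b_{i'j'} for all coordinates (i',j') ≠ (i,j). -/
import Mathlib


open Finset

/-- Index set: pairs (i,j) with 1 ≤ i ≤ n, 1 ≤ j ≤ m i. -/
abbrev Idx (n : ℕ) (m : Fin n → ℕ) := (i : Fin n) × Fin (m i)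

/-- The vector a − e_{ij} + e_{il}. -/
def exchStep {n : ℕ} {m : Fin n → ℕ} (a : Idx n m → ℕ) (i : Fin n) (j l : Fin (m i)) :
    Idx n m → ℕ :=
  fun p => if p = ⟨i, j⟩ then a p - 1 else if p = ⟨i, l⟩ then a p + 1 else a p

/-- The generalized bi-exchange property. -/
def BiExchange {n : ℕ} {m : Fin n → ℕ} (B : Set (Idx n m → ℕ)) : Prop :=
  ∀ a ∈ B, ∀ b ∈ B, ∀ (i : Fin n) (j : Fin (m i)),
    b ⟨i, j⟩ < a ⟨i, j⟩ →
      ∃ l : Fin (m i), a ⟨i, l⟩ < b ⟨i, l⟩ ∧ exchStep a i j l ∈ B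

/-- for b ∈ B with b_{ij} < r = max of the (i,j)-coordinates on B, there is
u ∈ B with u_{ij} = r and u ≤ b at all other coordinates. -/
theorem stmt13 {n : ℕ} {m : Fin n → ℕ} (B : Set (Idx n m → ℕ)) (t : ℕ)
    (hmod : ∀ a ∈ B, (∑ p, a p) = t) (hex : BiExchange B)
    (i : Fin n) (j : Fin (m i)) (r : ℕ)
    (hub : ∀ a ∈ B, a ⟨i, j⟩ ≤ r) (hmax : ∃ a ∈ B, a ⟨i, j⟩ = r)
    (b : Idx n m → ℕ) (hb : b ∈ B) (hbr : b ⟨i, j⟩ < r) :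
    ∃ u ∈ B, u ⟨i, j⟩ = r ∧ ∀ p : Idx n m, p ≠ ⟨i, j⟩ → u p ≤ b p := by
  obtain ⟨a0, ha0, ha0r⟩ := hmax
  suffices h : ∀ N : ℕ, ∀ u ∈ B, u ⟨i, j⟩ = r → (∑ p, (u p - b p)) ≤ N →
      ∃ u ∈ B, u ⟨i, j⟩ = r ∧ ∀ p : Idx n m, p ≠ ⟨i, j⟩ → u p ≤ b p by
    exact h _ a0 ha0 ha0r le_rfl
  intro N
  induction N with
  | zero =>
    intro u hu hur hφ
    refine ⟨u, hu, hur, fun p _ => ?_⟩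
    have h0 : u p - b p = 0 :=
      Finset.sum_eq_zero_iff.mp (Nat.le_zero.mp hφ) p (Finset.mem_univ p)
    omega
  | succ N ih =>
    intro u hu hur hφ
    by_cases hall : ∀ p : Idx n m, p ≠ ⟨i, j⟩ → u p ≤ b p
    · exact ⟨u, hu, hur, hall⟩
    · push_neg at hall
      obtain ⟨p0, hp0ne, hp0⟩ := hall
      have hp0' : b ⟨p0.1, p0.2⟩ < u ⟨p0.1, p0.2⟩ := by
        rw [Sigma.eta]; exact hp0
      obtain ⟨l, hl, hmem⟩ := hex u hu b hb p0.1 p0.2 hp0'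
      set u' := exchStep u p0.1 p0.2 l with hu'
      have hetap0 : (⟨p0.1, p0.2⟩ : Idx n m) = p0 := Sigma.eta p0
      have hlne : (⟨p0.1, l⟩ : Idx n m) ≠ p0 := by
        intro h
        have e1 : u ⟨p0.1, l⟩ = u p0 := congrArg u h
        have e2 : b ⟨p0.1, l⟩ = b p0 := congrArg b h
        omega
      have hijl : (⟨i, j⟩ : Idx n m) ≠ ⟨p0.1, l⟩ := by
        intro h
        have e1 : u ⟨i, j⟩ = u ⟨p0.1, l⟩ := congrArg u h
        have e2 : b ⟨i, j⟩ = b ⟨p0.1, l⟩ := congrArg b h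
        have := hub b hb
        omega
      have hijp0 : (⟨i, j⟩ : Idx n m) ≠ ⟨p0.1, p0.2⟩ := by
        rw [hetap0]; exact (Ne.symm hp0ne)
      have hur' : u' ⟨i, j⟩ = r := by
        simp only [hu', exchStep, if_neg hijp0, if_neg hijl]
        exact hur
      refine ih u' hmem hur' ?_
      have hlt : (∑ p, (u' p - b p)) < ∑ p, (u p - b p) := by
        apply Finset.sum_lt_sum
        · intro p _
          simp only [hu', exchStep]
          split_ifs with h1 h2
          · omega
          · subst h2
            omega
          · omega
        · refine ⟨p0, Finset.mem_univ p0, ?_⟩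
          have hval : u' p0 = u p0 - 1 := by
            simp [hu', exchStep, hetap0]
          omega
      omega
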